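/- The shuffle-indexed product * on maximal tubings of star graphs (Definition: T * V = ∑_{σ ∈ Sh(n−r, m−s)} T *_σ V, extended linearly) makes the graded vector space spanned by all maximal tubings of the star graphs St_n, n ≥ 1, into an associative algebra. -/

import Mathlib

open Finsupp

/-- All shuffles (interleavings) of two lists. -/
def listShuffles : List ℕ → List ℕ → List (List ℕ)
  | [], ys => [ys]
  | x :: xs, [] => [x :: xs]
  | x :: xs, y :: ys =>
      (listShuffles xs (y :: ys)).map (x :: ·) ++ (listShuffles (x :: xs) ys).map (y :: ·)
  termination_by xs ys => xs.length + ys.length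

/-- The code `(n, S, w)` of a maximal tubing `Tub_r(u₁,…,u_n)` of the star graph
`St_n`: `S = {u₁,…,u_r} ⊆ [n]` is the set of singleton tubes and
`w = (u_{r+1},…,u_n)` is the induced ordering of the complement `[n] ∖ S`
(`Tub_n` corresponds to `S = [n]`, `w = []`). -/
def IsMTCode (p : ℕ × Finset ℕ × List ℕ) : Prop :=
  1 ≤ p.1 ∧ p.2.1 ⊆ Finset.Icc 1 p.1 ∧ p.2.2.Nodup ∧
    ∀ x, x ∈ p.2.2 ↔ x ∈ Finset.Icc 1 p.1 ∧ x ∉ p.2.1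

/-- Basis: the maximal tubings of the star graphs `St_n`, `n ≥ 1`, i.e. the vertices
of the stellohedra. -/
def MTB : Type := {p : ℕ × Finset ℕ × List ℕ // IsMTCode p}

open Classical in
noncomputable def mkMT (p : ℕ × Finset ℕ × List ℕ) : MTB →₀ ℚ :=
  if h : IsMTCode p then Finsupp.single ⟨p, h⟩ 1 else 0

/-- The product of two basis elements: `T * V = ∑_{σ ∈ Sh(n−r,m−s)} T *_σ V`, i.e.
the singleton-tube sets are combined (with the second shifted by `n`) and the sum runs
over all shuffles of the two orderings of the non-singleton nodes. -/
noncomputable def mulB (a b : MTB) : MTB →₀ ℚ :=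
  ((listShuffles a.1.2.2 (b.1.2.2.map (· + a.1.1))).map fun w =>
      mkMT (a.1.1 + b.1.1, a.1.2.1 ∪ b.1.2.1.image (· + a.1.1), w)).sum

/-- The shuffle-indexed product `*` on the graded vector space spanned by all maximal
tubings of the star graphs, extended bilinearly. -/
noncomputable def stelloMul (f g : MTB →₀ ℚ) : MTB →₀ ℚ :=
  f.sum fun a ca => g.sum fun b cb => (ca * cb) • mulB a b

/-! ### Auxiliary lemmas on shuffles -/

lemma listShuffles_nil_left (y : List ℕ) : listShuffles [] y = [y] := by rw [listShuffles]

lemma listShuffles_nil_right (x : List ℕ) : listShuffles x [] = [x] := by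
  cases x <;> rw [listShuffles]

lemma listShuffles_cons (a b : ℕ) (x y : List ℕ) : listShuffles (a::x) (b::y) =
    (listShuffles x (b::y)).map (a :: ·) ++ (listShuffles (a::x) y).map (b :: ·) := by
  rw [listShuffles]

lemma listShuffles_map (f : ℕ → ℕ) (x y : List ℕ) :
    listShuffles (x.map f) (y.map f) = (listShuffles x y).map (List.map f) := by
  match x, y with
  | [], y => simp [listShuffles_nil_left]
  | a::x, [] => simp [listShuffles_nil_right]
  | a::x, b::y =>
    have h1 := listShuffles_map f x (b::y)
    have h2 := listShuffles_map f (a::x) y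
    simp only [List.map_cons] at *
    rw [listShuffles_cons, listShuffles_cons, h1, h2]
    simp [List.map_map, Function.comp_def]
  termination_by x.length + y.length

lemma mem_listShuffles : ∀ {x y w : List ℕ}, w ∈ listShuffles x y → w.Perm (x ++ y)
  | [], y, w, hw => by
      rw [listShuffles_nil_left] at hw; simp at hw; simp [hw]
  | a::x, [], w, hw => by
      rw [listShuffles_nil_right] at hw; simp at hw; simp [hw]
  | a::x, b::y, w, hw => by
      rw [listShuffles_cons] at hw
      rcases List.mem_append.1 hw with h | h <;> rcases List.mem_map.1 h with ⟨w', hw', rfl⟩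
      · exact (mem_listShuffles hw').cons a
      · exact ((mem_listShuffles hw').cons b).trans List.perm_middle.symm
  termination_by x y => x.length + y.length

section
variable {M : Type*} [AddCommMonoid M]

/-- Sum of `F` over all shuffles of `x` and `y`. -/
def shS (F : List ℕ → M) (x y : List ℕ) : M := ((listShuffles x y).map F).sum

lemma shS_nil_left (F : List ℕ → M) (y : List ℕ) : shS F [] y = F y := by
  simp [shS, listShuffles_nil_left]

lemma shS_nil_right (F : List ℕ → M) (x : List ℕ) : shS F x [] = F x := by
  simp [shS, listShuffles_nil_right]

lemma shS_cons (F : List ℕ → M) (a b : ℕ) (x y : List ℕ) :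
    shS F (a::x) (b::y) =
      shS (fun w => F (a::w)) x (b::y) + shS (fun w => F (b::w)) (a::x) y := by
  simp [shS, listShuffles_cons, List.map_map, Function.comp_def]

lemma shS_add (A B : List ℕ → M) (x y : List ℕ) :
    shS (fun w => A w + B w) x y = shS A x y + shS B x y := by
  unfold shS
  induction listShuffles x y with
  | nil => simp
  | cons hd tl ih => simp only [List.map_cons, List.sum_cons, ih]; abel

/-- Associativity of shuffles: summing `F` over two-step shuffles is independent of
the bracketing, `Sh(n+m,r)·(Sh(n,m)×1_r) = Sh(n,m,r) = Sh(n,m+r)·(1_n×Sh(m,r))`. -/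
theorem shS_assoc (F : List ℕ → M) (x y z : List ℕ) :
    shS (fun w => shS F w z) x y = shS (fun v => shS F x v) y z := by
  match x, y, z with
  | [], y, z => simp only [shS_nil_left]
  | x, [], z => simp only [shS_nil_left, shS_nil_right]
  | x, y, [] => simp only [shS_nil_right]
  | a::x, b::y, c::z =>
    have ihA := shS_assoc (fun u => F (a::u)) x (b::y) (c::z)
    have ihB := shS_assoc (fun u => F (b::u)) (a::x) y (c::z)
    have ihC := shS_assoc (fun u => F (c::u)) (a::x) (b::y) z
    simp only [shS_cons, shS_add]
    rw [ihA, ihB, ← ihC]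
    rw [shS_cons (fun v => shS (fun u => F (a::u)) x v) b c y z,
        shS_cons (fun w => shS (fun u => F (c::u)) w z) a b x y]
    abel
  termination_by x.length + y.length + z.length

lemma shS_map_right (G : List ℕ → M) (n : ℕ) (x y : List ℕ) :
    shS (fun v => G (v.map (· + n))) x y = shS G (x.map (· + n)) (y.map (· + n)) := by
  unfold shS
  rw [listShuffles_map (· + n) x y, List.map_map]
  rfl

end

/-! ### Validity of codes produced by the product -/

lemma valid_code {n m : ℕ} {Sa Sb : Finset ℕ} {xa xb : List ℕ}
    (ha : IsMTCode (n, Sa, xa)) (hb : IsMTCode (m, Sb, xb)) {w : List ℕ}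
    (hw : w ∈ listShuffles xa (xb.map (· + n))) :
    IsMTCode (n + m, Sa ∪ Sb.image (· + n), w) := by
  obtain ⟨h1a, h2a, h3a, h4a⟩ := ha
  obtain ⟨h1b, h2b, h3b, h4b⟩ := hb
  simp only [IsMTCode, Finset.mem_Icc] at *
  have hperm := mem_listShuffles hw
  have hxa : ∀ t ∈ xa, 1 ≤ t ∧ t ≤ n := fun t ht => ((h4a t).1 ht).1
  have hxb : ∀ t ∈ xb, 1 ≤ t ∧ t ≤ m := fun t ht => ((h4b t).1 ht).1
  have hSb : ∀ t ∈ Sb, 1 ≤ t ∧ t ≤ m := fun t ht => Finset.mem_Icc.1 (h2b ht)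
  refine ⟨by omega, ?_, ?_, ?_⟩
  · intro t ht
    rcases Finset.mem_union.1 ht with h | h
    · have := Finset.mem_Icc.1 (h2a h); simp only [Finset.mem_Icc]; omega
    · rcases Finset.mem_image.1 h with ⟨s, hs, rfl⟩
      have := hSb s hs; simp only [Finset.mem_Icc]; omega
  · rw [hperm.nodup_iff, List.nodup_append]
    refine ⟨h3a, h3b.map (fun s t hst => by omega), ?_⟩
    intro t ht u ht'
    rcases List.mem_map.1 ht' with ⟨s, hs, rfl⟩
    have := hxa _ ht; have := hxb s hs; omega
  · intro t
    rw [hperm.mem_iff, List.mem_append]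
    simp only [List.mem_map, Finset.mem_union, Finset.mem_image, Finset.mem_Icc]
    constructor
    · rintro (h | ⟨s, hs, rfl⟩)
      · have h' := (h4a t).1 h
        refine ⟨⟨h'.1.1, by omega⟩, ?_⟩
        rintro (hc | ⟨s, hsb, hst⟩)
        · exact h'.2 hc
        · have := hSb s hsb; omega
      · have h' := (h4b s).1 hs
        refine ⟨⟨by omega, by omega⟩, ?_⟩
        rintro (hc | ⟨s', hsb, hst⟩)
        · have := Finset.mem_Icc.1 (h2a hc); omega
        · have : s' = s := by omega
          subst this; exact h'.2 hsb
    · rintro ⟨⟨h1, h2⟩, hni⟩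
      push_neg at hni
      by_cases hn : t ≤ n
      · left; exact (h4a t).2 ⟨⟨h1, hn⟩, hni.1⟩
      · right
        refine ⟨t - n, (h4b (t - n)).2 ⟨⟨by omega, by omega⟩, fun hc => ?_⟩, by omega⟩
        exact hni.2 (t - n) hc (by omega)

/-! ### Bilinearity of `stelloMul` -/

lemma stelloMul_zero_left (g : MTB →₀ ℚ) : stelloMul 0 g = 0 := by
  simp [stelloMul]

lemma stelloMul_zero_right (f : MTB →₀ ℚ) : stelloMul f 0 = 0 := by
  simp [stelloMul]

lemma stelloMul_add_left (f₁ f₂ g : MTB →₀ ℚ) :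
    stelloMul (f₁ + f₂) g = stelloMul f₁ g + stelloMul f₂ g := by
  unfold stelloMul
  rw [Finsupp.sum_add_index']
  · intro a; simp
  · intro a b₁ b₂
    rw [← Finsupp.sum_add]
    congr 1; funext b cb
    rw [add_mul, add_smul]

lemma stelloMul_add_right (f g₁ g₂ : MTB →₀ ℚ) :
    stelloMul f (g₁ + g₂) = stelloMul f g₁ + stelloMul f g₂ := by
  unfold stelloMul
  rw [← Finsupp.sum_add]
  congr 1; funext a ca
  rw [Finsupp.sum_add_index']
  · intro b; simp
  · intro b c₁ c₂; rw [mul_add, add_smul]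

lemma stelloMul_smul_left (r : ℚ) (f g : MTB →₀ ℚ) :
    stelloMul (r • f) g = r • stelloMul f g := by
  unfold stelloMul
  rw [Finsupp.sum_smul_index, Finsupp.smul_sum]
  · congr 1; funext a ca
    rw [Finsupp.smul_sum]
    congr 1; funext b cb
    rw [smul_smul, mul_assoc]
  · intro a; simp

lemma stelloMul_smul_right (r : ℚ) (f g : MTB →₀ ℚ) :
    stelloMul f (r • g) = r • stelloMul f g := by
  unfold stelloMul
  rw [Finsupp.smul_sum]
  congr 1; funext a ca
  rw [Finsupp.sum_smul_index, Finsupp.smul_sum]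
  · congr 1; funext b cb
    rw [smul_smul, mul_left_comm]
  · intro b; simp

lemma stelloMul_single_single (a b : MTB) (x y : ℚ) :
    stelloMul (single a x) (single b y) = (x * y) • mulB a b := by
  unfold stelloMul
  rw [Finsupp.sum_single_index, Finsupp.sum_single_index]
  · simp
  · rw [Finsupp.sum_single_index] <;> simp

lemma stelloMul_listsum_left {α : Type*} (l : List α) (F : α → MTB →₀ ℚ) (g : MTB →₀ ℚ) :
    stelloMul (l.map F).sum g = (l.map fun t => stelloMul (F t) g).sum := by
  induction l with
  | nil => simp [stelloMul_zero_left]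
  | cons hd tl ih => simp [stelloMul_add_left, ih]

lemma stelloMul_listsum_right {α : Type*} (l : List α) (F : α → MTB →₀ ℚ) (f : MTB →₀ ℚ) :
    stelloMul f (l.map F).sum = (l.map fun t => stelloMul f (F t)).sum := by
  induction l with
  | nil => simp [stelloMul_zero_right]
  | cons hd tl ih => simp [stelloMul_add_right, ih]

/-! ### The core associativity computation on basis elements -/

/-- The product of two codes (the code-level version of `mulB`). -/
noncomputable def mulC (p q : ℕ × Finset ℕ × List ℕ) : MTB →₀ ℚ :=
  ((listShuffles p.2.2 (q.2.2.map (· + p.1))).map fun w =>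
      mkMT (p.1 + q.1, p.2.1 ∪ q.2.1.image (· + p.1), w)).sum

lemma mulB_eq (a b : MTB) : mulB a b = mulC a.1 b.1 := rfl

lemma core {n m k : ℕ} {Sa Sb Sc : Finset ℕ} {xa xb xc : List ℕ} :
    shS (fun w => mulC (n + m, Sa ∪ Sb.image (· + n), w) (k, Sc, xc)) xa (xb.map (· + n))
      = shS (fun v => mulC (n, Sa, xa) (m + k, Sb ∪ Sc.image (· + m), v)) xb (xc.map (· + m)) := by
  have hfun : ((· + n) ∘ (· + m) : ℕ → ℕ) = (· + (n + m)) := by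
    funext t; simp only [Function.comp_apply]; omega
  have hset : Sa ∪ Sb.image (· + n) ∪ Sc.image (· + (n + m))
      = Sa ∪ (Sb ∪ Sc.image (· + m)).image (· + n) := by
    rw [Finset.image_union, Finset.image_image, hfun, Finset.union_assoc]
  have hlist : (xc.map (· + m)).map (· + n) = xc.map (· + (n + m)) := by
    rw [List.map_map, hfun]
  calc shS (fun w => mulC (n + m, Sa ∪ Sb.image (· + n), w) (k, Sc, xc)) xa (xb.map (· + n))
      = shS (fun w => shS
          (fun u => mkMT (n + m + k, Sa ∪ Sb.image (· + n) ∪ Sc.image (· + (n + m)), u))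
          w (xc.map (· + (n + m)))) xa (xb.map (· + n)) := rfl
    _ = shS (fun v => shS
          (fun u => mkMT (n + m + k, Sa ∪ Sb.image (· + n) ∪ Sc.image (· + (n + m)), u))
          xa v) (xb.map (· + n)) (xc.map (· + (n + m))) :=
        shS_assoc _ xa (xb.map (· + n)) (xc.map (· + (n + m)))
    _ = shS (fun v => shS
          (fun u => mkMT (n + m + k, Sa ∪ Sb.image (· + n) ∪ Sc.image (· + (n + m)), u))
          xa (v.map (· + n))) xb (xc.map (· + m)) := by
        rw [shS_map_right (fun v => shS _ xa v) n xb (xc.map (· + m)), hlist]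
    _ = shS (fun v => mulC (n, Sa, xa) (m + k, Sb ∪ Sc.image (· + m), v)) xb (xc.map (· + m)) := by
        rw [hset, add_assoc]
        rfl

lemma mulB_single_assoc (a b c : MTB) :
    stelloMul (mulB a b) (single c 1) = stelloMul (single a 1) (mulB b c) := by
  obtain ⟨⟨n, Sa, xa⟩, ha⟩ := a
  obtain ⟨⟨m, Sb, xb⟩, hb⟩ := b
  obtain ⟨⟨k, Sc, xc⟩, hc⟩ := c
  show stelloMul (mulC (n, Sa, xa) (m, Sb, xb)) _ = stelloMul _ (mulC (m, Sb, xb) (k, Sc, xc))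
  rw [mulC, mulC, stelloMul_listsum_left, stelloMul_listsum_right]
  have hL : ∀ w ∈ listShuffles xa (xb.map (· + n)),
      stelloMul (mkMT (n + m, Sa ∪ Sb.image (· + n), w)) (single ⟨(k, Sc, xc), hc⟩ 1)
        = mulC (n + m, Sa ∪ Sb.image (· + n), w) (k, Sc, xc) := by
    intro w hw
    have hv := valid_code ha hb hw
    rw [mkMT, dif_pos hv]
    erw [stelloMul_single_single]
    rw [one_mul, one_smul]
    rfl
  have hR : ∀ v ∈ listShuffles xb (xc.map (· + m)),
      stelloMul (single ⟨(n, Sa, xa), ha⟩ 1) (mkMT (m + k, Sb ∪ Sc.image (· + m), v))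
        = mulC (n, Sa, xa) (m + k, Sb ∪ Sc.image (· + m), v) := by
    intro v hv'
    have hv := valid_code hb hc hv'
    rw [mkMT, dif_pos hv]
    erw [stelloMul_single_single]
    rw [one_mul, one_smul]
    rfl
  rw [List.map_congr_left hL, List.map_congr_left hR]
  exact core

lemma single_assoc (a b c : MTB) (x y z : ℚ) :
    stelloMul (stelloMul (single a x) (single b y)) (single c z)
      = stelloMul (single a x) (stelloMul (single b y) (single c z)) := by
  have hx : (single a x : MTB →₀ ℚ) = x • single a 1 := by
    rw [Finsupp.smul_single, smul_eq_mul, mul_one]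
  have hz : (single c z : MTB →₀ ℚ) = z • single c 1 := by
    rw [Finsupp.smul_single, smul_eq_mul, mul_one]
  rw [stelloMul_single_single, stelloMul_single_single, stelloMul_smul_left,
    stelloMul_smul_right, hx, hz, stelloMul_smul_right, stelloMul_smul_left,
    mulB_single_assoc, smul_smul, smul_smul]
  congr 1
  ring

lemma assoc0 (f : MTB →₀ ℚ) (b c : MTB) (y z : ℚ) :
    stelloMul (stelloMul f (single b y)) (single c z)
      = stelloMul f (stelloMul (single b y) (single c z)) := by
  induction f using Finsupp.induction with
  | zero => simp [stelloMul_zero_left, stelloMul_zero_right]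
  | single_add a x f _ _ ih =>
      rw [stelloMul_add_left, stelloMul_add_left, stelloMul_add_left, ih, single_assoc]

lemma assoc1 (f g : MTB →₀ ℚ) (c : MTB) (z : ℚ) :
    stelloMul (stelloMul f g) (single c z) = stelloMul f (stelloMul g (single c z)) := by
  induction g using Finsupp.induction with
  | zero => simp [stelloMul_zero_left, stelloMul_zero_right]
  | single_add b y g _ _ ih =>
      rw [stelloMul_add_right, stelloMul_add_left, stelloMul_add_left, stelloMul_add_right,
        ih, assoc0]

/-- The product `*` makes the graded vector space spanned by the maximal tubings of
the star graphs `St_n`, `n ≥ 1`, into an associative algebra. -/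
theorem stelloMul_assoc (f g h : MTB →₀ ℚ) :
    stelloMul (stelloMul f g) h = stelloMul f (stelloMul g h) := by
  induction h using Finsupp.induction with
  | zero => simp [stelloMul_zero_left, stelloMul_zero_right]
  | single_add c z h _ _ ih =>
      rw [stelloMul_add_right, stelloMul_add_right, stelloMul_add_right, ih, assoc1]
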